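/- Let β ∈ (−1,1) and δ ≥ 0. There exist a₀ > 0 and C > 0 such that for every real a ≥ a₀ there is a unique b ∈ ℝ with Im ∫_{β}^{1} √((a + i·b) − i·x² − i·δ) dx = 0, and this unique b satisfies |b − ( (β² + β + 1)/3 + δ )| ≤ C/a, where √ denotes the principal branch of the complex square root. -/

import Mathlib

noncomputable def rr (a t : ℝ) : ℝ := Real.sqrt (a^2 + t^2)
noncomputable def uu (a t : ℝ) : ℝ := Real.sqrt ((a + rr a t)/2)
noncomputable def ph (a t : ℝ) : ℝ := t / (2 * uu a t)

lemma rr_sq (a t : ℝ) : (rr a t)^2 = a^2 + t^2 :=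
  Real.sq_sqrt (by positivity)

lemma le_rr (a t : ℝ) (ha : 0 ≤ a) : a ≤ rr a t := by
  have : a = Real.sqrt (a^2) := by
    rw [Real.sqrt_sq ha]
  rw [this, rr]
  exact Real.sqrt_le_sqrt (by nlinarith [sq_nonneg t, Real.sq_sqrt (sq_nonneg a)])

lemma uu_sq (a t : ℝ) (ha : 0 < a) : (uu a t)^2 = (a + rr a t)/2 :=
  Real.sq_sqrt (by nlinarith [le_rr a t ha.le])

lemma sqrt_le_uu (a t : ℝ) (ha : 0 < a) : Real.sqrt a ≤ uu a t := by
  apply Real.sqrt_le_sqrt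
  nlinarith [le_rr a t ha.le]

lemma uu_pos (a t : ℝ) (ha : 0 < a) : 0 < uu a t :=
  lt_of_lt_of_le (Real.sqrt_pos.2 ha) (sqrt_le_uu a t ha)

lemma ph_sq (a t : ℝ) (ha : 0 < a) : (ph a t)^2 = (rr a t - a)/2 := by
  have hu := uu_sq a t ha
  have hu0 := uu_pos a t ha
  have hr := rr_sq a t
  have hra := le_rr a t ha.le
  rw [ph, div_pow]
  rw [show (2 * uu a t)^2 = 4 * ((a + rr a t)/2) by rw [← hu]; ring]
  rw [div_eq_div_iff (by nlinarith) (by norm_num)]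
  nlinarith

lemma cpow_half_eq (a t : ℝ) (ha : 0 < a) :
    ((a:ℂ) + (t:ℂ) * Complex.I) ^ (1/2 : ℂ)
      = ((uu a t : ℝ):ℂ) + ((ph a t : ℝ):ℂ) * Complex.I := by
  have hu0 := uu_pos a t ha
  have hu2 := uu_sq a t ha
  have hp2 := ph_sq a t ha
  have hup : ph a t * (2 * uu a t) = t := by
    rw [ph]; field_simp
  set z : ℂ := (a:ℂ) + (t:ℂ) * Complex.I with hzdef
  have hzre : z.re = a := by simp [hzdef]
  have hz : z ≠ 0 := fun h => by rw [h] at hzre; simp at hzre; linarith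
  set w : ℂ := ((uu a t : ℝ):ℂ) + ((ph a t : ℝ):ℂ) * Complex.I with hwdef
  have hw2 : w^2 = z := by
    rw [Complex.ext_iff]
    constructor
    · simp [hwdef, hzdef, pow_two, Complex.mul_re, Complex.add_re, Complex.add_im]
      nlinarith
    · simp [hwdef, hzdef, pow_two, Complex.mul_im, Complex.add_re, Complex.add_im]
      nlinarith
  set s : ℂ := z ^ (1/2 : ℂ) with hsdef
  have hs2 : s^2 = z := by
    have h := Complex.cpow_nat_inv_pow z (n := 2) two_ne_zero
    rw [hsdef, show (1/2 : ℂ) = ((2:ℕ):ℂ)⁻¹ by norm_num]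
    exact h
  have hsre : 0 < s.re := by
    rw [hsdef, Complex.cpow_def_of_ne_zero hz, Complex.exp_re]
    have him : (Complex.log z * (1/2)).im = Complex.arg z / 2 := by
      simp [Complex.mul_im, Complex.log_im]
      ring
    rw [him]
    have harg : |Complex.arg z| < Real.pi / 2 :=
      Complex.abs_arg_lt_pi_div_two_iff.2 (Or.inl (by rw [hzre]; exact ha))
    have := abs_lt.1 harg
    have hcos : 0 < Real.cos (Complex.arg z / 2) := by
      apply Real.cos_pos_of_mem_Ioo
      constructor <;> [linarith [this.1]; linarith [this.2]]
    positivity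
  have hfac : (s - w) * (s + w) = 0 := by
    have : s^2 - w^2 = 0 := by rw [hs2, hw2]; ring
    calc (s - w) * (s + w) = s^2 - w^2 := by ring
    _ = 0 := this
  rcases mul_eq_zero.1 hfac with h | h
  · exact sub_eq_zero.1 h
  · exfalso
    have hsw : s = -w := by linear_combination h
    have : s.re = -(uu a t) := by rw [hsw, hwdef]; simp
    rw [this] at hsre; linarith

lemma ph_zero (a : ℝ) : ph a 0 = 0 := by simp [ph]

lemma ph_odd (a t : ℝ) : ph a (-t) = - ph a t := by
  simp [ph, uu, rr, neg_div]

lemma ph_strictMono (a : ℝ) (ha : 0 < a) : StrictMono (ph a) := by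
  have key : ∀ s t : ℝ, 0 ≤ s → s < t → ph a s < ph a t := by
    intro s t hs hst
    have hr : rr a s < rr a t := by
      rw [rr, rr]
      apply Real.sqrt_lt_sqrt (by positivity)
      nlinarith
    have h2 : (ph a s)^2 < (ph a t)^2 := by
      rw [ph_sq a s ha, ph_sq a t ha]; linarith
    have hs0 : 0 ≤ ph a s := by
      have := uu_pos a s ha
      rw [ph]; positivity
    have ht0 : 0 ≤ ph a t := by
      have h1 : 0 < t := lt_of_le_of_lt hs hst
      have h2 := uu_pos a t ha
      rw [ph]
      positivity
    nlinarith
  intro s t hst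
  rcases le_or_gt 0 s with hs | hs
  · exact key s t hs hst
  · rcases le_or_gt t 0 with ht | ht
    · have := key (-t) (-s) (by linarith) (by linarith)
      rw [ph_odd, ph_odd] at this
      linarith
    · have h1 : ph a s < 0 := by
        have := key 0 (-s) le_rfl (by linarith)
        rw [ph_zero, ph_odd] at this
        linarith
      have h2 : 0 < ph a t := by
        have := key 0 t le_rfl ht
        rw [ph_zero] at this
        linarith
      linarith

lemma ph_continuous (a : ℝ) (ha : 0 < a) : Continuous (ph a) := by
  have hrr : Continuous (rr a) := by
    apply Real.continuous_sqrt.comp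
    fun_prop
  have huu : Continuous (uu a) := by
    apply Real.continuous_sqrt.comp
    fun_prop
  apply Continuous.div continuous_id (by fun_prop)
  intro t
  have := uu_pos a t ha
  positivity

lemma ph_approx (a t : ℝ) (ha : 0 < a) :
    |ph a t - t/(2*Real.sqrt a)| ≤ |t|^3/(16*a^2*Real.sqrt a) := by
  set sa := Real.sqrt a with hsa
  have hsa0 : 0 < sa := Real.sqrt_pos.2 ha
  have hsa2 : sa^2 = a := Real.sq_sqrt ha.le
  have hu0 := uu_pos a t ha
  have hule := sqrt_le_uu a t ha
  have hu2 := uu_sq a t ha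
  have hr2 := rr_sq a t
  have hra := le_rr a t ha.le
  set u := uu a t
  set r := rr a t
  have hB : (u - sa) * (8*a*sa) ≤ t^2 := by
    nlinarith [mul_nonneg (sub_nonneg.2 hule) hsa0.le, sq_nonneg (u - sa),
      mul_nonneg (sub_nonneg.2 hra) ha.le]
  have heq : ph a t - t/(2*sa) = t * (sa - u) / (2*u*sa) := by
    rw [ph]
    change t / (2 * u) - t / (2 * sa) = t * (sa - u) / (2 * u * sa)
    field_simp
  rw [heq, abs_div, abs_mul]
  rw [abs_of_pos (by positivity : (0:ℝ) < 2*u*sa)]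
  rw [show |sa - u| = u - sa from by rw [abs_sub_comm]; exact abs_of_nonneg (by linarith)]
  rw [div_le_div_iff₀ (by positivity) (by positivity)]
  have husa : a ≤ u * sa := by nlinarith
  have habs3 : |t|^3 = |t| * t^2 := by
    rw [pow_succ, sq_abs]; ring
  rw [habs3]
  nlinarith [mul_nonneg (mul_nonneg (abs_nonneg t) ha.le) (le_trans (by nlinarith [mul_nonneg (sub_nonneg.2 hule) hsa0.le] : (0:ℝ) ≤ (u - sa) * (8*a*sa)) hB),
    mul_le_mul_of_nonneg_left hB (mul_nonneg (abs_nonneg t) (by linarith : (0:ℝ) ≤ 2*a)),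
    mul_le_mul_of_nonneg_left husa (mul_nonneg (mul_nonneg (abs_nonneg t) (sq_nonneg t)) (by norm_num : (0:ℝ) ≤ 2))]

lemma uu_continuous (a : ℝ) : Continuous (uu a) := by
  apply Real.continuous_sqrt.comp
  have : Continuous (rr a) := Real.continuous_sqrt.comp (by fun_prop)
  fun_prop

lemma im_integral (β δ a b : ℝ) (ha : 0 < a) :
    (∫ x in β..(1:ℝ), ((a:ℂ) + (b:ℂ) * Complex.I - Complex.I * (x:ℂ)^2
        - Complex.I * (δ:ℂ))^(1/2:ℂ)).im
      = ∫ x in β..(1:ℝ), ph a (b - x^2 - δ) := by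
  have hrw : ∀ x : ℝ, ((a:ℂ) + (b:ℂ) * Complex.I - Complex.I * (x:ℂ)^2
        - Complex.I * (δ:ℂ))^(1/2:ℂ)
      = ((uu a (b - x^2 - δ) : ℝ):ℂ) + ((ph a (b - x^2 - δ) : ℝ):ℂ) * Complex.I := by
    intro x
    rw [show ((a:ℂ) + (b:ℂ) * Complex.I - Complex.I * (x:ℂ)^2 - Complex.I * (δ:ℂ))
        = ((a:ℂ) + (((b - x^2 - δ) : ℝ):ℂ) * Complex.I) from by push_cast; ring]
    exact cpow_half_eq a _ ha
  simp only [hrw]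
  have hcont : Continuous fun x : ℝ => b - x^2 - δ := by fun_prop
  have hU : IntervalIntegrable (fun x : ℝ => ((uu a (b - x^2 - δ) : ℝ):ℂ)) MeasureTheory.volume β 1 :=
    (Complex.continuous_ofReal.comp ((uu_continuous a).comp hcont)).intervalIntegrable _ _
  have hP : IntervalIntegrable (fun x : ℝ => ((ph a (b - x^2 - δ) : ℝ):ℂ) * Complex.I) MeasureTheory.volume β 1 :=
    ((Complex.continuous_ofReal.comp ((ph_continuous a ha).comp hcont)).mul continuous_const).intervalIntegrable _ _
  rw [intervalIntegral.integral_add hU hP, intervalIntegral.integral_mul_const,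
    intervalIntegral.integral_ofReal, intervalIntegral.integral_ofReal]
  simp

/-- Theorem `infiniper`(3): for `a` large,
`Im ∫_β^1 √((a+ib) − ix² − iδ) dx = 0` has a unique real solution `b`, with
`|b − ((β²+β+1)/3 + δ)| ≤ C/a`: the curve `Γ_{β,1}` is asymptotic to
`ℝ + i(β²+β+1)/3 + iδ`. -/
theorem stmt12 (β : ℝ) (hβ : β ∈ Set.Ioo (-1:ℝ) 1) (δ : ℝ) (hδ : 0 ≤ δ) :
    ∃ a₀ : ℝ, 0 < a₀ ∧ ∃ C : ℝ, 0 < C ∧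
      ∀ a : ℝ, a₀ ≤ a →
        (∃! b : ℝ,
          (∫ x in β..(1:ℝ),
            ((a : ℂ) + (b : ℂ) * Complex.I - Complex.I * (x : ℂ) ^ 2
              - Complex.I * δ) ^ (1/2 : ℂ)).im = 0) ∧
        ∀ b : ℝ,
          (∫ x in β..(1:ℝ),
            ((a : ℂ) + (b : ℂ) * Complex.I - Complex.I * (x : ℂ) ^ 2
              - Complex.I * δ) ^ (1/2 : ℂ)).im = 0 →
          |b - ((β ^ 2 + β + 1) / 3 + δ)| ≤ C / a := by
  obtain ⟨hβ1, hβ2⟩ := hβ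
  set m : ℝ := (β ^ 2 + β + 1) / 3 + δ with hm
  refine ⟨8, by norm_num, 8, by norm_num, fun a haa => ?_⟩
  have ha0 : (0:ℝ) < a := by linarith
  set sa := Real.sqrt a with hsadef
  have hsa0 : 0 < sa := Real.sqrt_pos.2 ha0
  have hsa2 : sa^2 = a := Real.sq_sqrt ha0.le
  set F : ℝ → ℝ := fun b => ∫ x in β..(1:ℝ), ph a (b - x^2 - δ) with hF
  have hIm : ∀ b : ℝ,
      (∫ x in β..(1:ℝ), ((a : ℂ) + (b : ℂ) * Complex.I - Complex.I * (x : ℂ) ^ 2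
        - Complex.I * δ) ^ (1/2 : ℂ)).im = F b := fun b => im_integral β δ a b ha0
  have hcontx : ∀ b : ℝ, Continuous fun x : ℝ => ph a (b - x^2 - δ) := by
    intro b
    exact (ph_continuous a ha0).comp (by fun_prop)
  -- strict monotonicity of F
  have hFmono : StrictMono F := by
    intro b1 b2 h
    apply intervalIntegral.integral_lt_integral_of_continuousOn_of_le_of_exists_lt hβ2
      (hcontx b1).continuousOn (hcontx b2).continuousOn
    · intro x _
      exact (ph_strictMono a ha0 (by linarith : b1 - x^2 - δ < b2 - x^2 - δ)).le
    · exact ⟨β, ⟨le_rfl, hβ2.le⟩, ph_strictMono a ha0 (by linarith)⟩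
  -- continuity of F
  have hFcont : Continuous F := by
    apply intervalIntegral.continuous_parametric_intervalIntegral_of_continuous'
      (f := fun (b : ℝ) (x : ℝ) => ph a (b - x^2 - δ))
    apply (ph_continuous a ha0).comp
    fun_prop
  -- the linear approximation
  have hlin : ∀ b : ℝ, (∫ x in β..(1:ℝ), (b - x^2 - δ)/(2*sa))
      = (1-β)*(b-m)/(2*sa) := by
    intro b
    rw [intervalIntegral.integral_div]
    congr 1
    have h1 : (∫ x in β..(1:ℝ), (b - x^2 - δ))
        = ∫ x in β..(1:ℝ), ((b - δ) - x^2) := by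
      congr 1; funext x; ring
    rw [h1, intervalIntegral.integral_sub intervalIntegrable_const
      ((continuous_pow 2).intervalIntegrable _ _),
      intervalIntegral.integral_const, integral_pow]
    rw [hm]
    simp only [smul_eq_mul]
    push_cast
    ring
  -- the error estimate
  have hEst : ∀ b : ℝ, |b - m| ≤ 1 →
      |F b - (1-β)*(b-m)/(2*sa)| ≤ (1-β)/(2*a^2*sa) := by
    intro b hb
    have hint1 : IntervalIntegrable (fun x : ℝ => ph a (b - x^2 - δ))
        MeasureTheory.volume β 1 := (hcontx b).intervalIntegrable _ _
    have hint2 : IntervalIntegrable (fun x : ℝ => (b - x^2 - δ)/(2*sa))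
        MeasureTheory.volume β 1 := (by fun_prop : Continuous fun x : ℝ =>
        (b - x^2 - δ)/(2*sa)).intervalIntegrable _ _
    have hsub : F b - (1-β)*(b-m)/(2*sa)
        = ∫ x in β..(1:ℝ), (ph a (b - x^2 - δ) - (b - x^2 - δ)/(2*sa)) := by
      rw [intervalIntegral.integral_sub hint1 hint2, ← hlin b]
    rw [hsub]
    have key : ∀ x ∈ Set.uIoc β (1:ℝ),
        ‖ph a (b - x^2 - δ) - (b - x^2 - δ)/(2*sa)‖ ≤ 1/(2*a^2*sa) := by
      intro x hx
      rw [Set.uIoc_of_le hβ2.le] at hx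
      obtain ⟨hx1, hx2⟩ := hx
      have hxsq : x^2 ≤ 1 := by nlinarith
      have hm1 : |x^2 + δ - m| ≤ 1 := by
        rw [hm, abs_le]
        constructor <;> nlinarith
      have ht2 : |b - x^2 - δ| ≤ 2 := by
        have : b - x^2 - δ = (b - m) - (x^2 + δ - m) := by ring
        rw [this]
        calc |(b - m) - (x^2 + δ - m)| ≤ |b - m| + |x^2 + δ - m| := abs_sub _ _
        _ ≤ 2 := by linarith
      have ht8 : |b - x^2 - δ|^3 ≤ 8 := by
        calc |b - x^2 - δ|^3 ≤ 2^3 := pow_le_pow_left₀ (abs_nonneg _) ht2 3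
        _ = 8 := by norm_num
      rw [Real.norm_eq_abs]
      calc |ph a (b - x^2 - δ) - (b - x^2 - δ)/(2*sa)|
          ≤ |b - x^2 - δ|^3/(16*a^2*sa) := ph_approx a _ ha0
      _ ≤ 8/(16*a^2*sa) := by gcongr
      _ = 1/(2*a^2*sa) := by rw [div_eq_div_iff (by positivity) (by positivity)]; ring
    have := intervalIntegral.norm_integral_le_of_norm_le_const key
    rw [Real.norm_eq_abs] at this
    calc |∫ x in β..(1:ℝ), (ph a (b - x^2 - δ) - (b - x^2 - δ)/(2*sa))|
        ≤ 1/(2*a^2*sa) * |1 - β| := this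
    _ = (1-β)/(2*a^2*sa) := by
        rw [abs_of_pos (by linarith : (0:ℝ) < 1 - β)]; ring
  -- sign at the endpoints
  have hwindow : |(8:ℝ)/a| ≤ 1 := by
    rw [abs_of_pos (by positivity)]
    rw [div_le_one ha0]; linarith
  have hposkey : (0:ℝ) < (1-β)*(8*a-1)/(2*a^2*sa) - (1-β)/(2*a^2*sa) + (1-β)/(2*a^2*sa) := by
    have : (0:ℝ) < (1-β)*(8*a-1)/(2*a^2*sa) := by
      apply div_pos (by nlinarith) (by positivity)
    linarith
  have hLval : (1-β)*((m + 8/a)-m)/(2*sa) = (1-β)*8/(2*a*sa) := by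
    field_simp
    ring
  have hLval' : (1-β)*((m - 8/a)-m)/(2*sa) = -((1-β)*8/(2*a*sa)) := by
    field_simp
    ring
  have hgap : (1-β)/(2*a^2*sa) < (1-β)*8/(2*a*sa) := by
    rw [div_lt_div_iff₀ (by positivity) (by positivity)]
    nlinarith [mul_pos (mul_pos (mul_pos (show (0:ℝ) < 1 - β by linarith) ha0) hsa0)
      (show (0:ℝ) < 8*a - 1 by linarith)]
  have hFpos : 0 < F (m + 8/a) := by
    have h := hEst (m + 8/a) (by rw [show m + 8/a - m = 8/a by ring]; exact hwindow)
    rw [hLval] at h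
    have := abs_le.1 h
    linarith [this.1]
  have hFneg : F (m - 8/a) < 0 := by
    have h := hEst (m - 8/a) (by rw [show m - 8/a - m = -(8/a) by ring, abs_neg]; exact hwindow)
    rw [hLval'] at h
    have := abs_le.1 h
    linarith [this.2]
  -- existence of a zero via IVT
  have hmem : (0:ℝ) ∈ Set.Icc (F (m - 8/a)) (F (m + 8/a)) := ⟨hFneg.le, hFpos.le⟩
  have hble : m - 8/a ≤ m + 8/a := by
    have : (0:ℝ) < 8/a := by positivity
    linarith
  obtain ⟨b₀, _, hFb₀⟩ := intermediate_value_Icc hble hFcont.continuousOn hmem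
  -- bound for any zero
  have hbound : ∀ b : ℝ, F b = 0 → |b - m| ≤ 8/a := by
    intro b hb
    have h1 : b ≤ m + 8/a := by
      by_contra h
      push_neg at h
      have := hFmono h
      rw [hb] at this
      linarith
    have h2 : m - 8/a ≤ b := by
      by_contra h
      push_neg at h
      have := hFmono h
      rw [hb] at this
      linarith
    rw [abs_le]
    constructor <;> linarith
  constructor
  · refine ⟨b₀, (hIm b₀).trans hFb₀, fun y hy => ?_⟩
    have hy' : F y = 0 := (hIm y).symm.trans hy
    exact hFmono.injective (hy'.trans hFb₀.symm)
  · intro b hb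
    rw [hIm b] at hb
    exact hbound b hb
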